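/- For every k ≥ 1, every finite sequence of distinct real numbers presented by insertion can be colored online (each point receives one of 2k−1 colors immediately upon arrival, never changed) so that at every time, no set of k consecutive present points contains the same color twice. -/

import Mathlib

namespace OnlineColor

open Classical in
/-- number of points of `g` strictly between `a` and `b`. -/
noncomputable def btwCount {m : ℕ} (g : Fin m → ℝ) (a b : ℝ) : ℕ :=
  (Finset.univ.filter (fun i => a < g i ∧ g i < b)).card

open Classical in
/-- `i` is among the `k-1` nearest points below `y` or `k-1` nearest above. -/
def isNear (k : ℕ) {m : ℕ} (g : Fin m → ℝ) (y : ℝ) (i : Fin m) : Prop :=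
  (g i < y ∧ btwCount g (g i) y < k - 1) ∨ (y < g i ∧ btwCount g y (g i) < k - 1)

open Classical in
noncomputable def pickColor (c k m : ℕ) [NeZero c] (g : Fin m → ℝ) (h : Fin m → Fin c)
    (y : ℝ) : Fin c :=
  if hc : ((Finset.univ.filter (fun i => isNear k g y i)).image h)ᶜ.Nonempty
  then hc.choose
  else ⟨0, Nat.pos_of_ne_zero (NeZero.ne c)⟩

noncomputable def colAt (c k : ℕ) [NeZero c] (L : List ℝ) (y : ℝ) : Fin c :=
  pickColor c k L.length (fun i => L.get i)
    (fun i => colAt c k (L.take i) (L.get i)) y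
termination_by L.length
decreasing_by
  have := i.isLt
  simp only [List.length_take]
  omega

lemma colAt_eq (c k : ℕ) [NeZero c] (L : List ℝ) (y : ℝ) :
    colAt c k L y = pickColor c k L.length (fun i => L.get i)
      (fun i => colAt c k (L.take i) (L.get i)) y := by
  conv_lhs => rw [colAt]


lemma btw_lt_left {m : ℕ} {g : Fin m → ℝ} {y : ℝ} {i j : Fin m}
    (hij : g i < g j) (hjy : g j < y) :
    btwCount g (g j) y < btwCount g (g i) y := by
  classical
  unfold btwCount
  have hsub : insert j (Finset.univ.filter fun a => g j < g a ∧ g a < y)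
      ⊆ Finset.univ.filter fun a => g i < g a ∧ g a < y := by
    intro a ha
    rcases Finset.mem_insert.1 ha with rfl | ha
    · simp [hij, hjy]
    · simp only [Finset.mem_filter] at ha ⊢
      exact ⟨ha.1, lt_trans hij ha.2.1, ha.2.2⟩
  have hj : j ∉ (Finset.univ.filter fun a => g j < g a ∧ g a < y) := by simp
  have h1 := Finset.card_le_card hsub
  rw [Finset.card_insert_of_notMem hj] at h1
  exact h1

lemma btw_lt_right {m : ℕ} {g : Fin m → ℝ} {y : ℝ} {i j : Fin m}
    (hyi : y < g i) (hij : g i < g j) :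
    btwCount g y (g i) < btwCount g y (g j) := by
  classical
  unfold btwCount
  have hsub : insert i (Finset.univ.filter fun a => y < g a ∧ g a < g i)
      ⊆ Finset.univ.filter fun a => y < g a ∧ g a < g j := by
    intro a ha
    rcases Finset.mem_insert.1 ha with rfl | ha
    · simp [hyi, hij]
    · simp only [Finset.mem_filter] at ha ⊢
      exact ⟨ha.1, ha.2.1, lt_trans ha.2.2 hij⟩
  have hi : i ∉ (Finset.univ.filter fun a => y < g a ∧ g a < g i) := by simp
  have h1 := Finset.card_le_card hsub
  rw [Finset.card_insert_of_notMem hi] at h1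
  exact h1

open Finset in
lemma card_nearLeft (k : ℕ) {m : ℕ} {g : Fin m → ℝ} (hg : Function.Injective g) (y : ℝ) :
    (Finset.univ.filter fun i => g i < y ∧ btwCount g (g i) y < k - 1).card ≤ k - 1 := by
  classical
  have := Finset.card_le_card_of_injOn (f := fun i => btwCount g (g i) y)
    (s := Finset.univ.filter fun i => g i < y ∧ btwCount g (g i) y < k - 1)
    (t := Finset.range (k-1)) ?_ ?_
  · simpa using this
  · intro a ha
    simp only [Finset.mem_coe, mem_filter, mem_range] at ha ⊢
    exact ha.2.2
  · intro a ha b hb hab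
    simp only [Finset.coe_filter, Set.mem_setOf_eq] at ha hb
    by_contra hne
    rcases lt_trichotomy (g a) (g b) with h | h | h
    · exact absurd hab (Nat.ne_of_gt (btw_lt_left h hb.2.1))
    · exact hne (hg h)
    · exact absurd hab (Nat.ne_of_lt (btw_lt_left h ha.2.1))

open Finset in
lemma card_nearRight (k : ℕ) {m : ℕ} {g : Fin m → ℝ} (hg : Function.Injective g) (y : ℝ) :
    (Finset.univ.filter fun i => y < g i ∧ btwCount g y (g i) < k - 1).card ≤ k - 1 := by
  classical
  have := Finset.card_le_card_of_injOn (f := fun i => btwCount g y (g i))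
    (s := Finset.univ.filter fun i => y < g i ∧ btwCount g y (g i) < k - 1)
    (t := Finset.range (k-1)) ?_ ?_
  · simpa using this
  · intro a ha
    simp only [Finset.mem_coe, mem_filter, mem_range] at ha ⊢
    exact ha.2.2
  · intro a ha b hb hab
    simp only [Finset.coe_filter, Set.mem_setOf_eq] at ha hb
    by_contra hne
    rcases lt_trichotomy (g a) (g b) with h | h | h
    · exact absurd hab (Nat.ne_of_lt (btw_lt_right ha.2.1 h))
    · exact hne (hg h)
    · exact absurd hab (Nat.ne_of_gt (btw_lt_right hb.2.1 h))

open Finset in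
lemma pickColor_avoid {c k m : ℕ} [NeZero c] {g : Fin m → ℝ} {h : Fin m → Fin c} {y : ℝ}
    (hg : Function.Injective g) (hkc : 2 * k - 1 ≤ c) (hk : 1 ≤ k) :
    ∀ i, isNear k g y i → h i ≠ pickColor c k m g h y := by
  classical
  have hsub : (Finset.univ.filter fun i => isNear k g y i)
      ⊆ (Finset.univ.filter fun i => g i < y ∧ btwCount g (g i) y < k - 1)
        ∪ (Finset.univ.filter fun i => y < g i ∧ btwCount g y (g i) < k - 1) := by
    intro a ha
    simp only [mem_filter, mem_union, Finset.mem_univ, true_and] at ha ⊢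
    exact ha
  have hFcard : ((Finset.univ.filter fun i => isNear k g y i).image h).card ≤ 2 * (k - 1) := by
    calc ((Finset.univ.filter fun i => isNear k g y i).image h).card
        ≤ (Finset.univ.filter fun i => isNear k g y i).card := Finset.card_image_le
      _ ≤ _ := Finset.card_le_card hsub
      _ ≤ _ + _ := Finset.card_union_le _ _
      _ ≤ (k-1) + (k-1) := add_le_add (card_nearLeft k hg y) (card_nearRight k hg y)
      _ = 2 * (k-1) := by ring
  have hcompl : (((Finset.univ.filter fun i => isNear k g y i).image h)ᶜ).Nonempty := by
    rw [← Finset.card_pos, Finset.card_compl, Fintype.card_fin]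
    omega
  intro i hi hcontra
  have hmem : pickColor c k m g h y ∈
      (((Finset.univ.filter fun i => isNear k g y i).image h)ᶜ) := by
    rw [pickColor, dif_pos hcompl]
    exact hcompl.choose_spec
  have hin : h i ∈ (Finset.univ.filter fun i => isNear k g y i).image h :=
    Finset.mem_image_of_mem _ (Finset.mem_filter.2 ⟨Finset.mem_univ _, hi⟩)
  rw [hcontra] at hin
  exact (Finset.mem_compl.1 hmem) hin

end OnlineColor

open OnlineColor

/-- `C` is a set of consecutive points (an interval in the real-line order)
among the points arrived before time `t`. -/
def ConsecPrefix {n : ℕ} (x : Fin n → ℝ) (t : ℕ) (C : Finset (Fin n)) : Prop :=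
  (∀ i ∈ C, (i : ℕ) < t) ∧
  ∀ i ∈ C, ∀ j ∈ C, ∀ m : Fin n, (m : ℕ) < t → x i ≤ x m → x m ≤ x j → m ∈ C

/-- Online coloring under insertion: for every `k ≥ 1` there is a deterministic
online algorithm (the color of a newly arrived point depends only on the
previously arrived points and the new point) using `2k - 1` colors such that at
every time, no set of `k` consecutive present points contains a color twice. -/
theorem online_coloring_2k_minus_1 (k : ℕ) (hk : 1 ≤ k) :
    ∃ col : List ℝ → ℝ → Fin (2 * k - 1),
      ∀ n : ℕ, ∀ x : Fin n → ℝ, Function.Injective x →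
        let χ : Fin n → Fin (2 * k - 1) :=
          fun i => col ((List.ofFn x).take i) (x i)
        ∀ t : ℕ, t ≤ n → ∀ C : Finset (Fin n), ConsecPrefix x t C →
          C.card ≤ k → ∀ i ∈ C, ∀ j ∈ C, i ≠ j → χ i ≠ χ j := by
  classical
  haveI : NeZero (2 * k - 1) := ⟨by omega⟩
  refine ⟨colAt (2 * k - 1) k, ?_⟩
  intro n x hx χ
  have hχ : ∀ i : Fin n, χ i = colAt (2 * k - 1) k ((List.ofFn x).take i) (x i) :=
    fun i => rfl
  intro t
  induction t with
  | zero =>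
    intro _ C hC _ i hi
    exact absurd (hC.1 i hi) (by omega)
  | succ t ih =>
    intro ht C hC hcard i hi j hj hij
    by_cases hall : ∀ a ∈ C, (a : ℕ) < t
    · exact ih (by omega) C
        ⟨hall, fun a ha b hb m hm h1 h2 => hC.2 a ha b hb m (by omega) h1 h2⟩
        hcard i hi j hj hij
    · push_neg at hall
      obtain ⟨p, hpC, hpt⟩ := hall
      have hpval : (p : ℕ) = t := by have := hC.1 p hpC; omega
      have htn : t < n := by omega
      have herase : ∀ a ∈ C, ∀ b ∈ C, a ≠ b → a ≠ p → b ≠ p → χ a ≠ χ b := by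
        intro a ha b hb hab hap hbp
        have hC' : ConsecPrefix x t (C.erase p) := by
          constructor
          · intro i hi
            have h1 := hC.1 i (Finset.mem_of_mem_erase hi)
            have h2 : i ≠ p := Finset.ne_of_mem_erase hi
            have h3 : (i : ℕ) ≠ t := fun h => h2 (Fin.ext (by omega))
            omega
          · intro i hi j hj m hm h1 h2
            have hmC : m ∈ C := hC.2 i (Finset.mem_of_mem_erase hi) j
              (Finset.mem_of_mem_erase hj) m (by omega) h1 h2
            refine Finset.mem_erase.2 ⟨?_, hmC⟩
            intro h; subst h; omega
        exact ih (by omega) (C.erase p) hC'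
          (le_trans (Finset.card_le_card (Finset.erase_subset _ _)) hcard)
          a (Finset.mem_erase.2 ⟨hap, ha⟩) b (Finset.mem_erase.2 ⟨hbp, hb⟩) hab
      have key : ∀ q ∈ C, q ≠ p → χ p ≠ χ q := by
        intro q hq hqp
        have hqt : (q : ℕ) < t := by
          have h1 := hC.1 q hq
          have h3 : (q : ℕ) ≠ t := fun h => hqp (Fin.ext (by omega))
          omega
        set L := (List.ofFn x).take t with hLdef
        have hL : L.length = t := by
          simp only [hLdef, List.length_take, List.length_ofFn]; omega
        have hιlt : ∀ i : Fin L.length, (i : ℕ) < n := fun i => by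
          have := i.isLt; omega
        let ι : Fin L.length → Fin n := fun i => ⟨i, hιlt i⟩
        have hget : ∀ i : Fin L.length, L.get i = x (ι i) := by
          intro i
          have h1 := i.isLt
          simp only [hLdef, List.get_eq_getElem, List.getElem_take, List.getElem_ofFn, ι]
        have htake : ∀ iv : ℕ, iv ≤ t → List.take iv L = List.take iv (List.ofFn x) := by
          intro iv hivt
          rw [hLdef, List.take_take]
          congr 1
          omega
        have hcol : ∀ i : Fin L.length,
            colAt (2 * k - 1) k (L.take i) (L.get i) = χ (ι i) := by
          intro i
          rw [hχ]
          have h1 := i.isLt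
          rw [htake (i : ℕ) (by omega), hget]
        have hginj : Function.Injective (fun i : Fin L.length => L.get i) := by
          intro a b hab
          simp only [hget] at hab
          have h2 := hx hab
          exact Fin.ext (by simpa [ι] using congrArg Fin.val h2)
        have hχp : χ p = colAt (2 * k - 1) k L (x p) := by
          rw [hχ, hpval, ← hLdef]
        rw [colAt_eq] at hχp
        have hiq : (q : ℕ) < L.length := by omega
        let iq : Fin L.length := ⟨q, hiq⟩
        have hιq : ι iq = q := Fin.ext rfl
        have hgq : L.get iq = x q := by rw [hget, hιq]
        have hbtw : ∀ (u v : Fin n), u ∈ C → v ∈ C → (u:ℕ) < t + 1 → (v:ℕ) < t + 1 →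
            u ≠ v →
            (Finset.univ.filter fun i : Fin L.length =>
              x u < L.get i ∧ L.get i < x v).card + 2 ≤ k := by
          intro u v hu hv hut hvt huv
          set M : Finset (Fin n) :=
            Finset.univ.filter (fun a => (a : ℕ) < t ∧ x u < x a ∧ x a < x v) with hM
          have hcardEq : (Finset.univ.filter fun i : Fin L.length =>
              x u < L.get i ∧ L.get i < x v).card = M.card := by
            apply Finset.card_bij (fun i _ => ι i)
            · intro a ha
              simp only [Finset.mem_filter, Finset.mem_univ, true_and, hget] at ha
              simp only [hM, Finset.mem_filter, Finset.mem_univ, true_and]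
              refine ⟨?_, ha⟩
              have := a.isLt
              show (a : ℕ) < t
              omega
            · intro a _ b _ hab
              exact Fin.ext (by simpa [ι] using congrArg Fin.val hab)
            · intro a ha
              simp only [hM, Finset.mem_filter, Finset.mem_univ, true_and] at ha
              have halt : (a : ℕ) < L.length := by omega
              refine ⟨⟨a, halt⟩, ?_, Fin.ext rfl⟩
              simp only [Finset.mem_filter, Finset.mem_univ, true_and, hget]
              have h6 : ι ⟨(a : ℕ), halt⟩ = a := Fin.ext rfl
              rw [h6]
              exact ha.2
          have hMC : M ⊆ C := by
            intro a ha
            simp only [hM, Finset.mem_filter, Finset.mem_univ, true_and] at ha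
            exact hC.2 u hu v hv a (by omega) (le_of_lt ha.2.1) (le_of_lt ha.2.2)
          have huM : u ∉ M := by
            intro h
            simp only [hM, Finset.mem_filter, Finset.mem_univ, true_and] at h
            exact lt_irrefl _ h.2.1
          have hvM : v ∉ M := by
            intro h
            simp only [hM, Finset.mem_filter, Finset.mem_univ, true_and] at h
            exact lt_irrefl _ h.2.2
          have hsub : insert u (insert v M) ⊆ C := by
            intro a ha
            rcases Finset.mem_insert.1 ha with rfl | ha
            · exact hu
            rcases Finset.mem_insert.1 ha with rfl | ha
            · exact hv
            exact hMC ha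
          have hcard2 : (insert u (insert v M)).card = M.card + 2 := by
            rw [Finset.card_insert_of_notMem (by
              simp only [Finset.mem_insert]
              rintro (rfl | h)
              · exact huv rfl
              · exact huM h), Finset.card_insert_of_notMem hvM]
          have hle := le_trans (Finset.card_le_card hsub) hcard
          omega
        have hxqp : x q ≠ x p := fun h => hqp (hx h)
        rcases lt_trichotomy (x q) (x p) with hlt | heq | hgt
        · have hnear : isNear k (fun i : Fin L.length => L.get i) (x p) iq := by
            left
            refine ⟨by show L.get iq < x p; rw [hgq]; exact hlt, ?_⟩
            have hb := hbtw q p hq hpC (by omega) (by omega) hqp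
            unfold btwCount
            simp only [hgq]
            omega
          have havoid := pickColor_avoid (c := 2*k-1) (k := k)
            (h := fun i : Fin L.length => colAt (2 * k - 1) k (L.take (i : ℕ)) (L.get i))
            hginj (le_refl _) hk iq hnear
          intro hcontra
          apply havoid
          show colAt (2 * k - 1) k (L.take iq) (L.get iq) = _
          rw [hcol iq, hιq, ← hcontra]
          exact hχp
        · exact absurd (hx heq) hqp
        · have hnear : isNear k (fun i : Fin L.length => L.get i) (x p) iq := by
            right
            refine ⟨by show x p < L.get iq; rw [hgq]; exact hgt, ?_⟩
            have hb := hbtw p q hpC hq (by omega) (by omega) (fun h => hqp h.symm)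
            unfold btwCount
            simp only [hgq]
            omega
          have havoid := pickColor_avoid (c := 2*k-1) (k := k)
            (h := fun i : Fin L.length => colAt (2 * k - 1) k (L.take (i : ℕ)) (L.get i))
            hginj (le_refl _) hk iq hnear
          intro hcontra
          apply havoid
          show colAt (2 * k - 1) k (L.take iq) (L.get iq) = _
          rw [hcol iq, hιq, ← hcontra]
          exact hχp
      rcases eq_or_ne i p with rfl | hip
      · exact key j hj (fun h => hij h.symm)
      · rcases eq_or_ne j p with rfl | hjp
        · exact (key i hi hip).symm
        · exact herase i hi j hj hij hip hjp
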